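/- arXiv:1810.09820 — 7 statements merged into one kernel-verified Lean document; each statement's English description precedes it below -/
import Mathlib

section
/- Let A be an n×n real matrix with spectral radius ρ(A) (the largest absolute value of its complex eigenvalues), let P̄ and Σ_w be symmetric positive semidefinite n×n matrices, and define P(0) = P̄, P(τ+1) = A·P(τ)·Aᵀ + Σ_w. If r_s ∈ (0,1] and ρ(A)²·(1 − r_s) < 1, then for every τ ∈ ℕ and every λ ≥ 0 the series Σ_{t=0}^∞ (1 − r_s)^t · (Tr(P(τ+t)) + λ) converges (is finite). -/
open Matrix Filter
open scoped NNReal ENNReal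

attribute [local instance] Matrix.linftyOpNormedRing Matrix.linftyOpNormedAlgebra

section DiscountedAux

variable {n : ℕ}

private lemma nnnorm_entry_le' (X : Matrix (Fin n) (Fin n) ℝ) (i j : Fin n) : ‖X i j‖₊ ≤ ‖X‖₊ := by
  rw [Matrix.linfty_opNNNorm_def]
  exact le_trans (Finset.single_le_sum (f := fun j => ‖X i j‖₊) (by simp) (Finset.mem_univ j))
    (Finset.le_sup (f := fun i => ∑ j, ‖X i j‖₊) (Finset.mem_univ i))

private lemma abs_trace_le' (X : Matrix (Fin n) (Fin n) ℝ) : |X.trace| ≤ n * ‖X‖ := by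
  calc |X.trace| ≤ ∑ i : Fin n, |X i i| := by
        simpa [Matrix.trace, Matrix.diag] using
          Finset.abs_sum_le_sum_abs (fun i => X i i) Finset.univ
    _ ≤ ∑ _i : Fin n, ‖X‖ := Finset.sum_le_sum fun i _ => by
        have := nnnorm_entry_le' X i i
        rw [← Real.norm_eq_abs]
        exact_mod_cast this
    _ = n * ‖X‖ := by simp [Finset.sum_const, mul_comm]

private lemma norm_transpose_le' (X : Matrix (Fin n) (Fin n) ℝ) : ‖Xᵀ‖ ≤ n * ‖X‖ := by
  have h : ‖Xᵀ‖₊ ≤ (n : ℝ≥0) * ‖X‖₊ := by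
    rw [Matrix.linfty_opNNNorm_def]
    apply Finset.sup_le
    intro i _
    calc ∑ j, ‖Xᵀ i j‖₊ ≤ ∑ _j : Fin n, ‖X‖₊ :=
          Finset.sum_le_sum fun j _ => nnnorm_entry_le' X j i
      _ = n * ‖X‖₊ := by simp [mul_comm]
  exact_mod_cast h

private lemma nnnorm_map_ofReal' (X : Matrix (Fin n) (Fin n) ℝ) :
    ‖X.map (Complex.ofReal ·)‖₊ = ‖X‖₊ := by
  simp [Matrix.linfty_opNNNorm_def, Matrix.map_apply]

private lemma closed_form' (A Pbar Sw : Matrix (Fin n) (Fin n) ℝ)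
    (P : ℕ → Matrix (Fin n) (Fin n) ℝ) (hP0 : P 0 = Pbar)
    (hPrec : ∀ τ : ℕ, P (τ + 1) = A * P τ * Aᵀ + Sw) (t : ℕ) :
    P t = A ^ t * Pbar * (Aᵀ) ^ t + ∑ j ∈ Finset.range t, A ^ j * Sw * (Aᵀ) ^ j := by
  induction t with
  | zero => simp [hP0]
  | succ t ih =>
    have key : ∀ (X : Matrix (Fin n) (Fin n) ℝ) (j : ℕ),
        A * (A ^ j * X * (Aᵀ) ^ j) * Aᵀ = A ^ (j+1) * X * (Aᵀ) ^ (j+1) := by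
      intro X j
      rw [pow_succ', pow_succ]
      noncomm_ring
    rw [hPrec, ih, mul_add, add_mul, Finset.mul_sum, Finset.sum_mul]
    simp only [key]
    rw [Finset.sum_range_succ']
    simp only [pow_zero, one_mul, mul_one]
    abel

private lemma pow_norm_bound' (A : Matrix (Fin n) (Fin n) ℝ) (ρA ρ' : ℝ)
    (hρ : ∀ z ∈ spectrum ℂ (A.map (Complex.ofReal ·)), ‖z‖ ≤ ρA)
    (h1 : 1 ≤ ρ') (hlt : ρA < ρ') :
    ∃ K : ℝ, 1 ≤ K ∧ ∀ j : ℕ, ‖A ^ j‖ ≤ K * ρ' ^ j := by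
  set B := A.map (Complex.ofReal ·) with hB
  have hBA : ∀ k : ℕ, ‖B ^ k‖₊ = ‖A ^ k‖₊ := by
    intro k
    have h1 : B = Complex.ofRealHom.mapMatrix A := rfl
    have h2 : B ^ k = (A ^ k).map (Complex.ofReal ·) := by
      rw [h1, ← map_pow]; rfl
    rw [h2, nnnorm_map_ofReal']
  have hsr : spectralRadius ℂ B ≤ (ρA.toNNReal : ℝ≥0∞) := by
    apply iSup₂_le
    intro z hz
    have hz' : ‖z‖ ≤ ρA := by exact hρ z hz
    rw [ENNReal.coe_le_coe, ← NNReal.coe_le_coe, coe_nnnorm, Real.coe_toNNReal']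
    exact le_trans hz' (le_max_left _ _)
  have hρ'0 : (0:ℝ) < ρ' := lt_of_lt_of_le one_pos h1
  have hlt' : spectralRadius ℂ B < ((ρ'.toNNReal : ℝ≥0) : ℝ≥0∞) :=
    lt_of_le_of_lt hsr (by
      rw [ENNReal.coe_lt_coe]
      exact (Real.toNNReal_lt_toNNReal_iff hρ'0).mpr hlt)
  have hev :=
    (spectrum.pow_nnnorm_pow_one_div_tendsto_nhds_spectralRadius B).eventually_lt_const hlt'
  obtain ⟨k₀, hk₀⟩ := eventually_atTop.mp hev
  have hAk : ∀ k, max k₀ 1 ≤ k → ‖A ^ k‖ ≤ ρ' ^ k := by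
    intro k hk
    have hk1 : 1 ≤ k := le_trans (le_max_right _ _) hk
    have hkpos : (0:ℝ) < k := by exact_mod_cast hk1
    have h2 := ENNReal.rpow_le_rpow
      (le_of_lt (hk₀ k (le_trans (le_max_left _ _) hk))) (le_of_lt hkpos)
    rw [← ENNReal.rpow_mul, one_div, inv_mul_cancel₀ (ne_of_gt hkpos), ENNReal.rpow_one,
      ENNReal.rpow_natCast, ← ENNReal.coe_pow, ENNReal.coe_le_coe, hBA] at h2
    have h3 : (‖A ^ k‖₊ : ℝ) ≤ ((ρ'.toNNReal ^ k : ℝ≥0) : ℝ) := by exact_mod_cast h2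
    rwa [coe_nnnorm, NNReal.coe_pow, Real.coe_toNNReal _ (le_of_lt hρ'0)] at h3
  refine ⟨1 + ∑ j ∈ Finset.range (max k₀ 1), ‖A ^ j‖,
    le_add_of_nonneg_right (Finset.sum_nonneg fun i _ => norm_nonneg _), ?_⟩
  intro j
  have hρ'j : (1:ℝ) ≤ ρ' ^ j := one_le_pow₀ h1
  rcases lt_or_ge j (max k₀ 1) with h | h
  · have hs : ‖A ^ j‖ ≤ ∑ i ∈ Finset.range (max k₀ 1), ‖A ^ i‖ :=
      Finset.single_le_sum (fun i _ => norm_nonneg _) (Finset.mem_range.mpr h)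
    nlinarith [norm_nonneg (A ^ j),
      Finset.sum_nonneg (fun i (_ : i ∈ Finset.range (max k₀ 1)) => norm_nonneg (A ^ i))]
  · have := hAk j h
    nlinarith [pow_nonneg (le_of_lt hρ'0) j,
      Finset.sum_nonneg (fun i (_ : i ∈ Finset.range (max k₀ 1)) => norm_nonneg (A ^ i))]

end DiscountedAux

/-- Under the stability condition `ρ(A)² (1 − r_s) < 1` (where `ρA` bounds
the absolute values of all complex eigenvalues of `A`), the geometrically discounted series
of one-stage costs `∑_{t} (1 − r_s)^t (Tr (P (τ+t)) + λ)` converges for every `τ` and every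
`λ ≥ 0`. -/
theorem discounted_cost_summable
    {n : ℕ} (A Pbar Sw : Matrix (Fin n) (Fin n) ℝ)
    (hPbar : Pbar.PosSemidef) (hSw : Sw.PosSemidef)
    (P : ℕ → Matrix (Fin n) (Fin n) ℝ)
    (hP0 : P 0 = Pbar)
    (hPrec : ∀ τ : ℕ, P (τ + 1) = A * P τ * Aᵀ + Sw)
    (rs ρA : ℝ) (hrs0 : 0 < rs) (hrs1 : rs ≤ 1)
    (hρ : ∀ z ∈ spectrum ℂ (A.map (Complex.ofReal ·)), ‖z‖ ≤ ρA)
    (hstab : ρA ^ 2 * (1 - rs) < 1) :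
    ∀ τ : ℕ, ∀ lam : ℝ, 0 ≤ lam →
      Summable (fun t : ℕ => (1 - rs) ^ t * ((P (τ + t)).trace + lam)) := by
  intro τ lam hlam
  set q : ℝ := 1 - rs with hqdef
  by_cases hq : q = 0
  · apply summable_of_ne_finset_zero (s := {0})
    intro t ht
    have ht0 : t ≠ 0 := by simpa using ht
    simp [hq, zero_pow ht0]
  have hq0 : 0 ≤ q := by simp [hqdef]; linarith
  have hqpos : 0 < q := lt_of_le_of_ne hq0 (Ne.symm hq)
  have hq1 : q < 1 := by simp [hqdef]; linarith
  -- choose r with `ρA^2 < r`, `1 < r`, `q * r < 1`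
  have hρq : ρA ^ 2 < 1 / q := (lt_div_iff₀ hqpos).mpr hstab
  have h1q : 1 < 1 / q := by rw [lt_div_iff₀ hqpos]; linarith
  set r : ℝ := (max (ρA ^ 2) 1 + 1 / q) / 2 with hrdef
  have hm1 : (1:ℝ) ≤ max (ρA ^ 2) 1 := le_max_right _ _
  have hmlt : max (ρA ^ 2) 1 < 1 / q := max_lt hρq h1q
  have h1r : 1 < r := by rw [hrdef]; linarith
  have hρr : ρA ^ 2 < r := by
    have := le_max_left (ρA ^ 2) 1
    rw [hrdef]; linarith
  have hqr : q * r < 1 := by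
    have hr2 : r < 1 / q := by rw [hrdef]; linarith
    have := mul_lt_mul_of_pos_left hr2 hqpos
    rwa [mul_one_div, div_self (ne_of_gt hqpos)] at this
  -- ρ' = sqrt r
  set ρ' : ℝ := Real.sqrt r with hρ'def
  have hr0 : (0:ℝ) ≤ r := by linarith
  have hρ'sq : ρ' ^ 2 = r := Real.sq_sqrt hr0
  have hρ'0 : 0 ≤ ρ' := Real.sqrt_nonneg r
  have hρ'1 : 1 ≤ ρ' := by nlinarith
  have hρAρ' : ρA < ρ' := by nlinarith
  obtain ⟨K, hK1, hK⟩ := pow_norm_bound' A ρA ρ' hρ hρ'1 hρAρ'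
  have hK0 : 0 ≤ K := by linarith
  -- trace bound
  have hterm : ∀ (X : Matrix (Fin n) (Fin n) ℝ) (j : ℕ),
      ‖A ^ j * X * (Aᵀ) ^ j‖ ≤ n * K ^ 2 * ‖X‖ * r ^ j := by
    intro X j
    have hrj : (0:ℝ) ≤ ρ' ^ j := pow_nonneg hρ'0 j
    calc ‖A ^ j * X * (Aᵀ) ^ j‖ ≤ ‖A ^ j * X‖ * ‖(Aᵀ) ^ j‖ := Matrix.linfty_opNorm_mul _ _
      _ ≤ ‖A ^ j‖ * ‖X‖ * ‖(Aᵀ) ^ j‖ :=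
          mul_le_mul_of_nonneg_right (Matrix.linfty_opNorm_mul _ _) (norm_nonneg _)
      _ ≤ ‖A ^ j‖ * ‖X‖ * (n * ‖A ^ j‖) := by
          apply mul_le_mul_of_nonneg_left _ (mul_nonneg (norm_nonneg _) (norm_nonneg _))
          rw [← transpose_pow]
          exact norm_transpose_le' (A ^ j)
      _ ≤ (K * ρ' ^ j) * ‖X‖ * (n * (K * ρ' ^ j)) := by
          apply mul_le_mul
          · exact mul_le_mul_of_nonneg_right (hK j) (norm_nonneg _)
          · exact mul_le_mul_of_nonneg_left (hK j) (Nat.cast_nonneg n)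
          · positivity
          · positivity
      _ = n * K ^ 2 * ‖X‖ * (ρ' ^ 2) ^ j := by ring
      _ = n * K ^ 2 * ‖X‖ * r ^ j := by rw [hρ'sq]
  set C : ℝ := n * (n * K ^ 2 * ‖Pbar‖ + n * K ^ 2 * ‖Sw‖ / (r - 1)) with hCdef
  have htrace : ∀ t, |(P t).trace| ≤ C * r ^ t := by
    intro t
    have hgeom : ∑ j ∈ Finset.range t, r ^ j ≤ r ^ t / (r - 1) := by
      rw [geom_sum_eq (by linarith : r ≠ 1)]
      exact div_le_div_of_nonneg_right (by linarith) (by linarith)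
    have hnorm : ‖P t‖ ≤ n * K ^ 2 * ‖Pbar‖ * r ^ t + n * K ^ 2 * ‖Sw‖ * (r ^ t / (r - 1)) := by
      rw [closed_form' A Pbar Sw P hP0 hPrec t]
      calc ‖A ^ t * Pbar * (Aᵀ) ^ t + ∑ j ∈ Finset.range t, A ^ j * Sw * (Aᵀ) ^ j‖
          ≤ ‖A ^ t * Pbar * (Aᵀ) ^ t‖ + ‖∑ j ∈ Finset.range t, A ^ j * Sw * (Aᵀ) ^ j‖ :=
            norm_add_le _ _
        _ ≤ n * K ^ 2 * ‖Pbar‖ * r ^ t + ∑ j ∈ Finset.range t, ‖A ^ j * Sw * (Aᵀ) ^ j‖ := by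
            gcongr
            · exact hterm Pbar t
            · exact norm_sum_le _ _
        _ ≤ n * K ^ 2 * ‖Pbar‖ * r ^ t + ∑ j ∈ Finset.range t, n * K ^ 2 * ‖Sw‖ * r ^ j := by
            gcongr with j hj
            exact hterm Sw j
        _ ≤ n * K ^ 2 * ‖Pbar‖ * r ^ t + n * K ^ 2 * ‖Sw‖ * (r ^ t / (r - 1)) := by
            rw [← Finset.mul_sum]
            exact add_le_add_right (mul_le_mul_of_nonneg_left hgeom (by positivity)) _
    calc |(P t).trace| ≤ n * ‖P t‖ := abs_trace_le' (P t)
      _ ≤ n * (n * K ^ 2 * ‖Pbar‖ * r ^ t + n * K ^ 2 * ‖Sw‖ * (r ^ t / (r - 1))) := by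
          apply mul_le_mul_of_nonneg_left hnorm (Nat.cast_nonneg n)
      _ = C * r ^ t := by
          rw [hCdef]
          field_simp
  have hC0 : 0 ≤ C := by
    have := htrace 0
    have := abs_nonneg ((P 0).trace)
    nlinarith
  -- comparison
  have hqr0 : 0 ≤ q * r := mul_nonneg hq0 (by linarith)
  have hsum : Summable (fun t : ℕ => C * r ^ τ * (q * r) ^ t + lam * q ^ t) :=
    ((summable_geometric_of_lt_one hqr0 hqr).mul_left _).add
      ((summable_geometric_of_lt_one hq0 hq1).mul_left _)
  apply Summable.of_norm_bounded hsum
  intro t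
  have hb : |(P (τ + t)).trace + lam| ≤ C * r ^ (τ + t) + lam := by
    calc |(P (τ + t)).trace + lam| ≤ |(P (τ + t)).trace| + |lam| := abs_add_le _ _
      _ ≤ C * r ^ (τ + t) + lam := by
          rw [abs_of_nonneg hlam]
          exact add_le_add_left (htrace (τ + t)) lam
  calc ‖q ^ t * ((P (τ + t)).trace + lam)‖
      = q ^ t * |(P (τ + t)).trace + lam| := by
        rw [Real.norm_eq_abs, abs_mul, abs_pow, abs_of_nonneg hq0]
    _ ≤ q ^ t * (C * r ^ (τ + t) + lam) := by
        apply mul_le_mul_of_nonneg_left hb (pow_nonneg hq0 t)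
    _ = C * r ^ τ * (q * r) ^ t + lam * q ^ t := by
        rw [pow_add, mul_pow]; ring
end

section
/- Suppose Q : ℕ × {0,1} → ℝ and J ∈ ℝ solve the average-cost Bellman optimality equation of the scheduling MDP, i.e., writing V(τ) := min(Q(τ,0), Q(τ,1)), for all τ ∈ ℕ: Q(τ,0) = g(τ) + V(τ+1) − J and Q(τ,1) = g(τ) + λ + r_s·V(0) + (1 − r_s)·V(τ+1) − J. Then Q(τ,1) − Q(τ,0) = λ + r_s·(V(0) − V(τ+1)) for all τ, and if V is nondecreasing then Q is submodular: Q(τ,1) − Q(τ,0) ≤ Q(τ',1) − Q(τ',0) whenever τ ≥ τ'. (Submodularity of the Q-factor, Lemma 4.) -/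
/-- **Submodularity of the Q-factor, Lemma 4.** If `(Q, J)` solves the
average-cost Bellman optimality equation of the scheduling MDP, then
`Q τ 1 − Q τ 0 = λ + r_s (V 0 − V (τ+1))` for all `τ`, and if `V` is nondecreasing then
`Q` is submodular: `Q τ 1 − Q τ 0 ≤ Q τ' 1 − Q τ' 0` whenever `τ ≥ τ'`. -/
theorem Q_factor_submodular
    (rs lam J : ℝ) (hrs0 : 0 < rs) (hrs1 : rs ≤ 1) (hlam : 0 ≤ lam)
    (g : ℕ → ℝ) (hg : Monotone g)
    (Q : ℕ → Fin 2 → ℝ) (V : ℕ → ℝ)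
    (hV : ∀ τ : ℕ, V τ = min (Q τ 0) (Q τ 1))
    (hQ0 : ∀ τ : ℕ, Q τ 0 = g τ + V (τ + 1) - J)
    (hQ1 : ∀ τ : ℕ, Q τ 1 = g τ + lam + rs * V 0 + (1 - rs) * V (τ + 1) - J) :
    (∀ τ : ℕ, Q τ 1 - Q τ 0 = lam + rs * (V 0 - V (τ + 1))) ∧
      (Monotone V →
        ∀ τ τ' : ℕ, τ' ≤ τ → Q τ 1 - Q τ 0 ≤ Q τ' 1 - Q τ' 0) := by
  have key : ∀ τ : ℕ, Q τ 1 - Q τ 0 = lam + rs * (V 0 - V (τ + 1)) := by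
    intro τ; rw [hQ0, hQ1]; ring
  refine ⟨key, fun hmono τ τ' h => ?_⟩
  rw [key, key]
  have := hmono (Nat.succ_le_succ h)
  nlinarith
end

section
/- Suppose Q : ℕ × {0,1} → ℝ and J ∈ ℝ solve the average-cost Bellman optimality equation of the scheduling MDP, i.e., writing V(τ) := min(Q(τ,0), Q(τ,1)), for all τ ∈ ℕ: Q(τ,0) = g(τ) + V(τ+1) − J and Q(τ,1) = g(τ) + λ + r_s·V(0) + (1 − r_s)·V(τ+1) − J, and suppose V is nondecreasing. Then the set {τ ∈ ℕ : Q(τ,1) ≤ Q(τ,0)} is upward closed: if Q(τ,1) ≤ Q(τ,0) and τ' ≥ τ then Q(τ',1) ≤ Q(τ',0). Consequently, if this set is nonempty with least element θ⋆, the policy f⋆(τ) = 0 for τ < θ⋆ and f⋆(τ) = 1 for τ ≥ θ⋆ satisfies Q(τ, f⋆(τ)) = min(Q(τ,0), Q(τ,1)) for every τ, i.e., the optimal scheduling policy is of threshold type. (Theorem 1.) -/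
/-- **Theorem 1: threshold structure of the optimal policy.** If `(Q, J)`
solves the average-cost Bellman optimality equation and `V` is nondecreasing, then the set
`{τ | Q τ 1 ≤ Q τ 0}` is upward closed; consequently, if it has a least element `θ⋆`, the
threshold policy `f⋆(τ) = 0` for `τ < θ⋆` and `f⋆(τ) = 1` for `τ ≥ θ⋆` picks a minimizing
action at every state. -/
theorem optimal_policy_threshold
    (rs lam J : ℝ) (hrs0 : 0 < rs) (hrs1 : rs ≤ 1) (hlam : 0 ≤ lam)
    (g : ℕ → ℝ) (hg : Monotone g)
    (Q : ℕ → Fin 2 → ℝ) (V : ℕ → ℝ)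
    (hV : ∀ τ : ℕ, V τ = min (Q τ 0) (Q τ 1))
    (hQ0 : ∀ τ : ℕ, Q τ 0 = g τ + V (τ + 1) - J)
    (hQ1 : ∀ τ : ℕ, Q τ 1 = g τ + lam + rs * V 0 + (1 - rs) * V (τ + 1) - J)
    (hVmono : Monotone V) :
    (∀ τ τ' : ℕ, Q τ 1 ≤ Q τ 0 → τ ≤ τ' → Q τ' 1 ≤ Q τ' 0) ∧
      (∀ θ : ℕ, IsLeast {τ : ℕ | Q τ 1 ≤ Q τ 0} θ →
        ∀ τ : ℕ, Q τ (if τ < θ then 0 else 1) = min (Q τ 0) (Q τ 1)) := by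
  have key : ∀ τ τ' : ℕ, Q τ 1 ≤ Q τ 0 → τ ≤ τ' → Q τ' 1 ≤ Q τ' 0 := by
    intro τ τ' h hle
    have hm : V (τ + 1) ≤ V (τ' + 1) := hVmono (by omega)
    rw [hQ0 τ, hQ1 τ] at h
    rw [hQ0 τ', hQ1 τ']
    nlinarith
  refine ⟨key, ?_⟩
  intro θ ⟨hθmem, hθlb⟩ τ
  by_cases h : τ < θ
  · simp only [if_pos h]
    have : ¬ Q τ 1 ≤ Q τ 0 := fun hc => absurd (hθlb hc) (by omega)
    exact (min_eq_left (le_of_not_ge this)).symm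
  · simp only [if_neg h]
    exact (min_eq_right (key θ τ hθmem (by omega))).symm
end

section
/- Fix γ ∈ (0,1), λ ≥ 0, r_s ∈ [0,1], and a bounded nondecreasing function g : ℕ → ℝ. Define T_γ on bounded functions V : ℕ → ℝ by (T_γ V)(τ) := min( g(τ) + γ·V(τ+1), g(τ) + λ + γ·(r_s·V(0) + (1 − r_s)·V(τ+1)) ). Then T_γ maps bounded functions to bounded functions, satisfies sup_τ |T_γV(τ) − T_γW(τ)| ≤ γ · sup_τ |V(τ) − W(τ)| for all bounded V, W (i.e., it is a γ-contraction in the sup norm), and its unique bounded fixed point V_γ is nondecreasing: V_γ(τ) ≥ V_γ(τ') whenever τ ≥ τ'. (Monotonicity of the discounted value function, Lemma 2 in discounted form.) -/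
/-- The discounted Bellman operator of the scheduling MDP. -/
def bellmanOp (γ lam rs : ℝ) (g : ℕ → ℝ) (V : ℕ → ℝ) : ℕ → ℝ :=
  fun τ => min (g τ + γ * V (τ + 1))
    (g τ + lam + γ * (rs * V 0 + (1 - rs) * V (τ + 1)))

/-- A real-valued function on `ℕ` is bounded. -/
def IsBddFun (V : ℕ → ℝ) : Prop := ∃ C : ℝ, ∀ τ : ℕ, |V τ| ≤ C

open BoundedContinuousFunction

section AuxLemmas

variable {γ lam rs : ℝ} {g : ℕ → ℝ}

/-- Pointwise bound on the Bellman operator. -/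
lemma bellman_abs_le (hγ0 : 0 ≤ γ) (hlam : 0 ≤ lam) (hrs0 : 0 ≤ rs) (hrs1 : rs ≤ 1)
    {Cg CV : ℝ} (hCg : ∀ n, |g n| ≤ Cg) {V : ℕ → ℝ} (hCV : ∀ n, |V n| ≤ CV) (τ : ℕ) :
    |bellmanOp γ lam rs g V τ| ≤ Cg + lam + γ * CV := by
  have hCV0 : 0 ≤ CV := le_trans (abs_nonneg _) (hCV 0)
  have h1 := abs_le.mp (hCg τ)
  have h2 := abs_le.mp (hCV (τ + 1))
  have h3 := abs_le.mp (hCV 0)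
  have hv1 : γ * V (τ + 1) ≤ γ * CV := mul_le_mul_of_nonneg_left h2.2 hγ0
  have hv1' : γ * (-CV) ≤ γ * V (τ + 1) := mul_le_mul_of_nonneg_left h2.1 hγ0
  have hmix : -CV ≤ rs * V 0 + (1 - rs) * V (τ + 1) ∧
      rs * V 0 + (1 - rs) * V (τ + 1) ≤ CV := by
    have b1 : rs * V 0 ≤ rs * CV := mul_le_mul_of_nonneg_left h3.2 hrs0
    have b2 : rs * (-CV) ≤ rs * V 0 := mul_le_mul_of_nonneg_left h3.1 hrs0
    have b3 : (1 - rs) * V (τ + 1) ≤ (1 - rs) * CV :=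
      mul_le_mul_of_nonneg_left h2.2 (by linarith)
    have b4 : (1 - rs) * (-CV) ≤ (1 - rs) * V (τ + 1) :=
      mul_le_mul_of_nonneg_left h2.1 (by linarith)
    constructor <;> nlinarith
  have hm1 : γ * (rs * V 0 + (1 - rs) * V (τ + 1)) ≤ γ * CV :=
    mul_le_mul_of_nonneg_left hmix.2 hγ0
  have hm2 : γ * (-CV) ≤ γ * (rs * V 0 + (1 - rs) * V (τ + 1)) :=
    mul_le_mul_of_nonneg_left hmix.1 hγ0
  have hgcv : γ * (-CV) = -(γ * CV) := by ring
  have ha : |g τ + γ * V (τ + 1)| ≤ Cg + lam + γ * CV := by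
    rw [abs_le]; constructor <;> linarith
  have hb : |g τ + lam + γ * (rs * V 0 + (1 - rs) * V (τ + 1))| ≤ Cg + lam + γ * CV := by
    rw [abs_le]; constructor <;> linarith
  have ha' := abs_le.mp ha
  have hb' := abs_le.mp hb
  rw [abs_le]
  refine ⟨le_min ha'.1 hb'.1, (min_le_left _ _).trans ha'.2⟩

/-- Pointwise contraction estimate. -/
lemma bellman_abs_sub_le (hγ0 : 0 ≤ γ) (hrs0 : 0 ≤ rs) (hrs1 : rs ≤ 1)
    {V W : ℕ → ℝ} {D : ℝ} (hD : ∀ n, |V n - W n| ≤ D) (τ : ℕ) :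
    |bellmanOp γ lam rs g V τ - bellmanOp γ lam rs g W τ| ≤ γ * D := by
  have h1 : |(g τ + γ * V (τ + 1)) - (g τ + γ * W (τ + 1))| ≤ γ * D := by
    have he : (g τ + γ * V (τ + 1)) - (g τ + γ * W (τ + 1))
        = γ * (V (τ + 1) - W (τ + 1)) := by ring
    rw [he, abs_mul, abs_of_nonneg hγ0]
    exact mul_le_mul_of_nonneg_left (hD _) hγ0
  have h2 : |(g τ + lam + γ * (rs * V 0 + (1 - rs) * V (τ + 1)))
      - (g τ + lam + γ * (rs * W 0 + (1 - rs) * W (τ + 1)))| ≤ γ * D := by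
    have he : (g τ + lam + γ * (rs * V 0 + (1 - rs) * V (τ + 1)))
        - (g τ + lam + γ * (rs * W 0 + (1 - rs) * W (τ + 1)))
        = γ * (rs * (V 0 - W 0) + (1 - rs) * (V (τ + 1) - W (τ + 1))) := by ring
    rw [he, abs_mul, abs_of_nonneg hγ0]
    refine mul_le_mul_of_nonneg_left ?_ hγ0
    calc |rs * (V 0 - W 0) + (1 - rs) * (V (τ + 1) - W (τ + 1))|
        ≤ |rs * (V 0 - W 0)| + |(1 - rs) * (V (τ + 1) - W (τ + 1))| := abs_add_le _ _
      _ = rs * |V 0 - W 0| + (1 - rs) * |V (τ + 1) - W (τ + 1)| := by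
          rw [abs_mul, abs_mul, abs_of_nonneg hrs0, abs_of_nonneg (show (0:ℝ) ≤ 1 - rs by linarith)]
      _ ≤ rs * D + (1 - rs) * D := add_le_add
          (mul_le_mul_of_nonneg_left (hD 0) hrs0)
          (mul_le_mul_of_nonneg_left (hD _) (by linarith))
      _ = D := by ring
  exact (abs_min_sub_min_le_max _ _ _ _).trans (max_le h1 h2)

/-- The Bellman operator preserves monotonicity. -/
lemma bellman_monotone (hγ0 : 0 ≤ γ) (hrs1 : rs ≤ 1) (hg : Monotone g)
    {V : ℕ → ℝ} (hV : Monotone V) : Monotone (bellmanOp γ lam rs g V) := by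
  intro a b hab
  have hgle : g a ≤ g b := hg hab
  have hVle : V (a + 1) ≤ V (b + 1) := hV (by omega)
  have h := mul_le_mul_of_nonneg_left hVle (mul_nonneg hγ0 (show (0:ℝ) ≤ 1 - rs by linarith))
  have h2 := mul_le_mul_of_nonneg_left hVle hγ0
  refine min_le_min (by linarith) ?_
  have he : ∀ x : ℝ, γ * (rs * V 0 + (1 - rs) * x) = γ * (rs * V 0) + γ * (1 - rs) * x := by
    intro x; ring
  rw [he, he]
  linarith

end AuxLemmas

/-- **Lemma 2 in discounted form.** For `γ ∈ (0,1)`, `λ ≥ 0`, `r_s ∈ [0,1]`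
and bounded nondecreasing `g`, the operator `T_γ` maps bounded functions to bounded
functions, is a `γ`-contraction in the sup norm, and its unique bounded fixed point is
nondecreasing. -/
theorem discounted_value_function_monotone
    (γ lam rs : ℝ) (hγ0 : 0 < γ) (hγ1 : γ < 1) (hlam : 0 ≤ lam)
    (hrs0 : 0 ≤ rs) (hrs1 : rs ≤ 1)
    (g : ℕ → ℝ) (hg : Monotone g) (hgbdd : IsBddFun g) :
    (∀ V : ℕ → ℝ, IsBddFun V → IsBddFun (bellmanOp γ lam rs g V)) ∧
      (∀ V W : ℕ → ℝ, IsBddFun V → IsBddFun W →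
        (⨆ τ : ℕ, |bellmanOp γ lam rs g V τ - bellmanOp γ lam rs g W τ|)
          ≤ γ * ⨆ τ : ℕ, |V τ - W τ|) ∧
      (∃! V : ℕ → ℝ, IsBddFun V ∧ bellmanOp γ lam rs g V = V) ∧
      (∀ V : ℕ → ℝ, IsBddFun V → bellmanOp γ lam rs g V = V → Monotone V) := by
  obtain ⟨Cg, hCg⟩ := hgbdd
  -- Part 1: maps bounded to bounded
  have part1 : ∀ V : ℕ → ℝ, IsBddFun V → IsBddFun (bellmanOp γ lam rs g V) := by
    rintro V ⟨CV, hCV⟩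
    exact ⟨Cg + lam + γ * CV, bellman_abs_le hγ0.le hlam hrs0 hrs1 hCg hCV⟩
  -- Part 2: contraction in sup norm
  have part2 : ∀ V W : ℕ → ℝ, IsBddFun V → IsBddFun W →
      (⨆ τ : ℕ, |bellmanOp γ lam rs g V τ - bellmanOp γ lam rs g W τ|)
        ≤ γ * ⨆ τ : ℕ, |V τ - W τ| := by
    rintro V W ⟨CV, hCV⟩ ⟨CW, hCW⟩
    have hbdd : BddAbove (Set.range fun τ : ℕ => |V τ - W τ|) := by
      refine ⟨CV + CW, ?_⟩
      rintro x ⟨τ, rfl⟩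
      exact (abs_sub _ _).trans (add_le_add (hCV τ) (hCW τ))
    have hD : ∀ n, |V n - W n| ≤ ⨆ τ : ℕ, |V τ - W τ| := fun n =>
      le_ciSup hbdd n
    exact ciSup_le fun τ => bellman_abs_sub_le hγ0.le hrs0 hrs1 hD τ
  -- Set up the contraction on bounded continuous functions
  set T : (ℕ →ᵇ ℝ) → (ℕ →ᵇ ℝ) := fun V =>
    BoundedContinuousFunction.ofNormedAddCommGroupDiscrete
      (bellmanOp γ lam rs g ⇑V) (Cg + lam + γ * ‖V‖)
      (fun τ => by
        rw [Real.norm_eq_abs]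
        exact bellman_abs_le hγ0.le hlam hrs0 hrs1 hCg
          (fun n => by simpa [Real.norm_eq_abs] using V.norm_coe_le_norm n) τ)
    with hT
  have hTcoe : ∀ V : ℕ →ᵇ ℝ, ⇑(T V) = bellmanOp γ lam rs g ⇑V := fun V => rfl
  have hK1 : (⟨γ, hγ0.le⟩ : NNReal) < 1 := by
    exact NNReal.coe_lt_coe.mp hγ1
  have hlip : LipschitzWith ⟨γ, hγ0.le⟩ T := by
    refine LipschitzWith.of_dist_le_mul fun V W => ?_
    have hnn : (0 : ℝ) ≤ (⟨γ, hγ0.le⟩ : NNReal) * dist V W := by positivity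
    refine (BoundedContinuousFunction.dist_le hnn).mpr fun τ => ?_
    have hD : ∀ n, |V n - W n| ≤ dist V W := fun n => by
      simpa [Real.dist_eq] using BoundedContinuousFunction.dist_coe_le_dist (f := V) (g := W) n
    have := bellman_abs_sub_le (g := g) (lam := lam) hγ0.le hrs0 hrs1 hD τ
    simpa [hTcoe, Real.dist_eq] using this
  have hcontr : ContractingWith ⟨γ, hγ0.le⟩ T := ⟨hK1, hlip⟩
  set V₀ : ℕ →ᵇ ℝ := ContractingWith.fixedPoint T hcontr with hV₀
  have hfix : T V₀ = V₀ := hcontr.fixedPoint_isFixedPt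
  have hV₀bdd : IsBddFun ⇑V₀ :=
    ⟨‖V₀‖, fun n => by simpa [Real.norm_eq_abs] using V₀.norm_coe_le_norm n⟩
  have hV₀fix : bellmanOp γ lam rs g ⇑V₀ = ⇑V₀ := by
    rw [← hTcoe V₀, hfix]
  -- uniqueness: any bounded fixed point equals ⇑V₀
  have huniq : ∀ W : ℕ → ℝ, IsBddFun W → bellmanOp γ lam rs g W = W → W = ⇑V₀ := by
    rintro W ⟨CW, hCW⟩ hWfix
    set W' : ℕ →ᵇ ℝ := BoundedContinuousFunction.ofNormedAddCommGroupDiscrete W CW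
      (fun n => by rw [Real.norm_eq_abs]; exact hCW n) with hW'
    have hW'coe : ⇑W' = W := rfl
    have hW'fix : Function.IsFixedPt T W' := by
      apply BoundedContinuousFunction.ext
      intro n
      have : ⇑(T W') = bellmanOp γ lam rs g W := by rw [hTcoe, hW'coe]
      rw [show (T W') n = bellmanOp γ lam rs g W n from congrFun this n, hWfix]
      exact (congrFun hW'coe n).symm
    have := hcontr.fixedPoint_unique hW'fix
    rw [← hW'coe, this]
  -- monotonicity of the fixed point via iteration from 0
  have hmono : Monotone ⇑V₀ := by
    have hiter : ∀ n : ℕ, Monotone ⇑(T^[n] 0) := by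
      intro n
      induction n with
      | zero => intro a b _; simp
      | succ k ih =>
          rw [Function.iterate_succ_apply']
          rw [show ⇑(T (T^[k] 0)) = bellmanOp γ lam rs g ⇑(T^[k] 0) from hTcoe _]
          exact bellman_monotone hγ0.le hrs1 hg ih
    intro a b hab
    have htend := hcontr.tendsto_iterate_fixedPoint (0 : ℕ →ᵇ ℝ)
    have hta : Filter.Tendsto (fun n => (T^[n] 0 : ℕ →ᵇ ℝ) a) Filter.atTop (nhds (V₀ a)) :=
      ((continuous_eval_const a).tendsto V₀).comp htend
    have htb : Filter.Tendsto (fun n => (T^[n] 0 : ℕ →ᵇ ℝ) b) Filter.atTop (nhds (V₀ b)) :=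
      ((continuous_eval_const b).tendsto V₀).comp htend
    exact le_of_tendsto_of_tendsto' hta htb fun n => hiter n hab
  refine ⟨part1, part2, ⟨⇑V₀, ⟨hV₀bdd, hV₀fix⟩, fun W hW => huniq W hW.1 hW.2⟩, ?_⟩
  intro V hVbdd hVfix
  rw [huniq V hVbdd hVfix]
  exact hmono
end

section
/- Fix r_s ∈ (0,1), θ ∈ ℕ, and r_θ ∈ [0,1]. Define p := r_s / (r_s·(θ + 1 − r_θ) + 1) and π : ℕ → ℝ by π(i) = p for 0 ≤ i ≤ θ, π(θ+1) = (1 − r_s·r_θ)·p, and π(θ+1+j) = (1 − r_s)^j · (1 − r_s·r_θ)·p for all j ≥ 0. Then π is a probability distribution on ℕ (π ≥ 0 and Σ_{i=0}^∞ π(i) = 1), and π is stationary for the Markov chain induced by the randomized threshold policy: π(i+1) = π(i) for 0 ≤ i < θ, π(θ+1) = (1 − r_s·r_θ)·π(θ), π(τ+1) = (1 − r_s)·π(τ) for τ > θ, and π(0) = r_s·r_θ·π(θ) + r_s·Σ_{τ > θ} π(τ). -/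
/-- The explicit distribution `π` (constant `p` on `{0,…,θ}`, then
geometrically decaying) is a probability distribution on `ℕ` and is stationary for the
Markov chain induced by the Bernoulli randomized threshold policy `(θ, r_θ)` over a channel
with success probability `r_s`. -/
theorem randomized_threshold_stationary_distribution
    (rs rθ : ℝ) (θ : ℕ) (hrs0 : 0 < rs) (hrs1 : rs < 1)
    (hrθ0 : 0 ≤ rθ) (hrθ1 : rθ ≤ 1)
    (p : ℝ) (hp : p = rs / (rs * ((θ : ℝ) + 1 - rθ) + 1))
    (π : ℕ → ℝ)
    (hπlow : ∀ i : ℕ, i ≤ θ → π i = p)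
    (hπhigh : ∀ j : ℕ, π (θ + 1 + j) = (1 - rs) ^ j * ((1 - rs * rθ) * p)) :
    (∀ i : ℕ, 0 ≤ π i) ∧
      HasSum π 1 ∧
      (∀ i : ℕ, i < θ → π (i + 1) = π i) ∧
      π (θ + 1) = (1 - rs * rθ) * π θ ∧
      (∀ τ : ℕ, θ < τ → π (τ + 1) = (1 - rs) * π τ) ∧
      π 0 = rs * rθ * π θ + rs * ∑' j : ℕ, π (θ + 1 + j) := by
  have hden : 0 < rs * ((θ : ℝ) + 1 - rθ) + 1 := by
    have hθ : (0:ℝ) ≤ (θ : ℝ) := Nat.cast_nonneg θ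
    nlinarith
  have hp0 : 0 ≤ p := by
    rw [hp]; positivity
  have hc0 : 0 ≤ 1 - rs * rθ := by nlinarith
  have h1s0 : 0 ≤ 1 - rs := by linarith
  have h1s1 : 1 - rs < 1 := by linarith
  -- geometric sum for the tail
  have hgeo : HasSum (fun j : ℕ => (1 - rs) ^ j * ((1 - rs * rθ) * p))
      ((1 - rs * rθ) * p / rs) := by
    have := (hasSum_geometric_of_lt_one h1s0 h1s1).mul_right ((1 - rs * rθ) * p)
    have heq : (1 - (1 - rs))⁻¹ * ((1 - rs * rθ) * p) = (1 - rs * rθ) * p / rs := by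
      rw [sub_sub_cancel, div_eq_inv_mul]
    rwa [heq] at this
  have htail : HasSum (fun j : ℕ => π (θ + 1 + j)) ((1 - rs * rθ) * p / rs) := by
    simpa only [hπhigh] using hgeo
  refine ⟨?_, ?_, ?_, ?_, ?_, ?_⟩
  · intro i
    rcases le_or_gt i θ with h | h
    · rw [hπlow i h]; exact hp0
    · obtain ⟨j, rfl⟩ : ∃ j, i = θ + 1 + j := ⟨i - (θ + 1), by omega⟩
      rw [hπhigh]; positivity
  · have h1 : HasSum (fun j : ℕ => π (j + (θ + 1))) ((1 - rs * rθ) * p / rs) := by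
      simpa only [Nat.add_comm] using htail
    have h2 := (hasSum_nat_add_iff (θ + 1)).mp h1
    have hsum : ∑ i ∈ Finset.range (θ + 1), π i = ((θ : ℝ) + 1) * p := by
      rw [Finset.sum_congr rfl (fun i hi => hπlow i (by
        simpa using Nat.lt_succ_iff.mp (Finset.mem_range.mp hi)))]
      simp [mul_comm]
    rw [hsum] at h2
    have heq : (1 - rs * rθ) * p / rs + ((θ : ℝ) + 1) * p = 1 := by
      rw [hp]
      field_simp
      ring
    rwa [heq] at h2
  · intro i hi
    rw [hπlow i (le_of_lt hi), hπlow (i + 1) hi]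
  · rw [hπlow θ le_rfl]
    have := hπhigh 0
    simpa using this
  · intro τ hτ
    obtain ⟨j, rfl⟩ : ∃ j, τ = θ + 1 + j := ⟨τ - (θ + 1), by omega⟩
    have h1 : θ + 1 + j + 1 = θ + 1 + (j + 1) := by omega
    rw [h1, hπhigh, hπhigh]
    ring
  · rw [htail.tsum_eq, hπlow 0 (Nat.zero_le θ), hπlow θ le_rfl]
    field_simp
    ring
end

section
/- Fix r_s ∈ (0,1), θ ∈ ℕ, and r_θ ∈ [0,1], and let π be the stationary distribution of the randomized threshold chain: with p := r_s / (r_s·(θ + 1 − r_θ) + 1), π(i) = p for 0 ≤ i ≤ θ and π(θ+1+j) = (1 − r_s)^j · (1 − r_s·r_θ)·p for j ≥ 0. Then the stationary transmission rate satisfies π(θ)·r_θ + Σ_{τ > θ} π(τ) = 1 / (r_s·(θ + 1 − r_θ) + 1). In particular, for the deterministic threshold policy (r_θ = 1) the stationary transmission rate, which equals the stationary probability Pr(τ ≥ θ) = Σ_{i ≥ θ} π(i), is 1 / (r_s·θ + 1). -/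
/-- Under the stationary distribution of the randomized threshold chain,
the stationary transmission rate is `π θ · r_θ + ∑_{τ>θ} π τ = 1 / (r_s (θ + 1 − r_θ) + 1)`;
in particular, for the deterministic threshold policy (`r_θ = 1`) the stationary transmission
rate `Pr(τ ≥ θ) = ∑_{i ≥ θ} π i` equals `1 / (r_s θ + 1)`. -/
theorem randomized_threshold_transmission_rate
    (rs rθ : ℝ) (θ : ℕ) (hrs0 : 0 < rs) (hrs1 : rs < 1)
    (hrθ0 : 0 ≤ rθ) (hrθ1 : rθ ≤ 1)
    (p : ℝ) (hp : p = rs / (rs * ((θ : ℝ) + 1 - rθ) + 1))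
    (π : ℕ → ℝ)
    (hπlow : ∀ i : ℕ, i ≤ θ → π i = p)
    (hπhigh : ∀ j : ℕ, π (θ + 1 + j) = (1 - rs) ^ j * ((1 - rs * rθ) * p)) :
    π θ * rθ + (∑' j : ℕ, π (θ + 1 + j)) = 1 / (rs * ((θ : ℝ) + 1 - rθ) + 1) ∧
      (rθ = 1 → (∑' i : ℕ, π (θ + i)) = 1 / (rs * (θ : ℝ) + 1)) := by
  have hθ1 : (0:ℝ) ≤ (θ : ℝ) + 1 - rθ := by
    have : (0:ℝ) ≤ (θ : ℝ) := Nat.cast_nonneg θ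
    linarith
  have hD : 0 < rs * ((θ : ℝ) + 1 - rθ) + 1 := by nlinarith
  have hgeom : ∑' j : ℕ, (1 - rs) ^ j = 1 / rs := by
    rw [tsum_geometric_of_lt_one (by linarith) (by linarith)]
    ring_nf
  have hsum : (∑' j : ℕ, π (θ + 1 + j)) = (1 - rs * rθ) * p / rs := by
    calc (∑' j : ℕ, π (θ + 1 + j)) = ∑' j : ℕ, (1 - rs) ^ j * ((1 - rs * rθ) * p) := by
          exact tsum_congr fun j => hπhigh j
      _ = (∑' j : ℕ, (1 - rs) ^ j) * ((1 - rs * rθ) * p) := tsum_mul_right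
      _ = (1 - rs * rθ) * p / rs := by rw [hgeom]; ring
  have hπθ : π θ = p := hπlow θ le_rfl
  have hfirst : π θ * rθ + (∑' j : ℕ, π (θ + 1 + j)) = 1 / (rs * ((θ : ℝ) + 1 - rθ) + 1) := by
    rw [hπθ, hsum, hp]
    field_simp
    ring
  refine ⟨hfirst, fun h1 => ?_⟩
  have hsummable : Summable (fun j : ℕ => π (θ + 1 + j)) := by
    apply Summable.congr (f := fun j : ℕ => (1 - rs) ^ j * ((1 - rs * rθ) * p))
    · exact (summable_geometric_of_lt_one (by linarith) (by linarith)).mul_right _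
    · exact fun j => (hπhigh j).symm
  have hsplit : (∑' i : ℕ, π (θ + i)) = π θ + ∑' j : ℕ, π (θ + 1 + j) := by
    rw [Summable.tsum_eq_zero_add]
    · simp only [Nat.add_zero]
      congr 1
      exact tsum_congr fun j => by congr 1; omega
    · rw [← summable_nat_add_iff 1]
      exact hsummable.congr fun j => by congr 1; omega
  rw [hsplit, hπθ, hsum, hp, h1]
  have hD1 : 0 < rs * ((θ : ℝ) + 1 - 1) + 1 := by
    subst h1; exact hD
  field_simp
  ring
end

section
/- Fix r_s ∈ (0,1] and a communication budget b ∈ (0,1]. Define θ⋆ := ⌊(1 − b)/(r_s·b)⌋ (which equals ⌊1/(r_s·b) − 1/r_s⌋) and r⋆ := θ⋆ + 1 + (b − 1)/(b·r_s). Then 0 < r⋆ ≤ 1, and the randomized Bernoulli threshold policy (θ⋆, r⋆) meets the budget exactly: 1 / (r_s·(θ⋆ + 1 − r⋆) + 1) = b, i.e., its stationary transmission rate equals b. (Corollary 1.) -/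
/-- **Corollary 1.** For `r_s ∈ (0,1]` and a budget `b ∈ (0,1]`, the
threshold `θ⋆ = ⌊(1−b)/(r_s b)⌋ = ⌊1/(r_s b) − 1/r_s⌋` and randomization parameter
`r⋆ = θ⋆ + 1 + (b−1)/(b r_s)` satisfy `0 < r⋆ ≤ 1`, and the corresponding randomized
threshold policy meets the communication budget exactly:
`1 / (r_s (θ⋆ + 1 − r⋆) + 1) = b`. -/
theorem optimal_randomized_threshold_meets_budget
    (rs b : ℝ) (hrs0 : 0 < rs) (hrs1 : rs ≤ 1) (hb0 : 0 < b) (hb1 : b ≤ 1) :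
    ⌊(1 - b) / (rs * b)⌋₊ = ⌊1 / (rs * b) - 1 / rs⌋₊ ∧
      0 < (⌊(1 - b) / (rs * b)⌋₊ : ℝ) + 1 + (b - 1) / (b * rs) ∧
      (⌊(1 - b) / (rs * b)⌋₊ : ℝ) + 1 + (b - 1) / (b * rs) ≤ 1 ∧
      1 / (rs * ((⌊(1 - b) / (rs * b)⌋₊ : ℝ) + 1
          - ((⌊(1 - b) / (rs * b)⌋₊ : ℝ) + 1 + (b - 1) / (b * rs))) + 1) = b := by
  have hrb : (0:ℝ) < rs * b := by positivity
  have hx0 : 0 ≤ (1 - b) / (rs * b) := by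
    apply div_nonneg (by linarith) hrb.le
  set x := (1 - b) / (rs * b) with hxdef
  have heq : 1 / (rs * b) - 1 / rs = x := by
    field_simp [hxdef]
    rw [hxdef]
    field_simp
  have hkey : (b - 1) / (b * rs) = -x := by
    rw [hxdef, mul_comm b rs, ← neg_div, neg_sub]
  have hfl : (⌊x⌋₊ : ℝ) ≤ x := Nat.floor_le hx0
  have hfl2 : x < (⌊x⌋₊ : ℝ) + 1 := Nat.lt_floor_add_one x
  refine ⟨by rw [heq], ?_, ?_, ?_⟩
  · rw [hkey]; linarith
  · rw [hkey]; linarith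
  · rw [hkey]
    have : rs * ((⌊x⌋₊ : ℝ) + 1 - ((⌊x⌋₊ : ℝ) + 1 + -x)) + 1 = rs * x + 1 := by ring
    rw [this, hxdef]
    field_simp
    ring
end
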